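/- For any idempotent ultrafilter p on a semigroup S and any A ∈ p, the set A* := A ∩ {s ∈ S : s⁻¹A ∈ p} satisfies A* ∈ p and (A*)* = A* (Galvin Fixpoint Lemma). -/

import Mathlib

attribute [local instance] Ultrafilter.mul Ultrafilter.semigroup

/-- `starSet p A = A* = A ∩ {s : s⁻¹A ∈ p}`. -/
def starSet {S : Type*} [Mul S] (p : Ultrafilter S) (A : Set S) : Set S :=
  A ∩ {s : S | {t : S | s * t ∈ A} ∈ p}

/-- Galvin Fixpoint Lemma: for an idempotent ultrafilter `p` on a semigroup `S`
and `A ∈ p`, the set `A*` satisfies `A* ∈ p` and `(A*)* = A*`. -/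
theorem galvin_fixpoint {S : Type*} [Semigroup S] (p : Ultrafilter S)
    (hp : p * p = p) (A : Set S) (hA : A ∈ p) :
    starSet p A ∈ p ∧ starSet p (starSet p A) = starSet p A := by
  have key : ∀ B : Set S, B ∈ p → starSet p B ∈ p := by
    intro B hB
    have hB' : B ∈ p * p := by rw [hp]; exact hB
    have h2 : {s : S | {t : S | s * t ∈ B} ∈ p} ∈ p := by
      have := (Ultrafilter.eventually_mul p p (· ∈ B)).mp hB'
      exact this
    exact p.toFilter.inter_sets hB h2
  refine ⟨key A hA, ?_⟩
  apply Set.Subset.antisymm (Set.inter_subset_left)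
  intro s hs
  refine ⟨hs, ?_⟩
  obtain ⟨hsA, hsp⟩ := hs
  -- need {t | s * t ∈ starSet p A} ∈ p
  have h1 : {t : S | s * t ∈ A} ∈ p := hsp
  have h2 : {t : S | {u : S | (s * t) * u ∈ A} ∈ p} ∈ p := by
    have hmul : {t : S | s * t ∈ A} ∈ p * p := by rw [hp]; exact h1
    have := (Ultrafilter.eventually_mul p p (fun x => s * x ∈ A)).mp hmul
    filter_upwards [this] with t ht
    show ∀ᶠ u in (p : Filter S), (s * t) * u ∈ A
    simpa [mul_assoc] using ht
  filter_upwards [h1, h2] with t ht1 ht2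
  exact ⟨ht1, ht2⟩
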